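/- Let μ ∈ ℂ with μ ≠ 0, and suppose the subgroup Γ_μ of SL(2,ℂ) generated by X and Y_μ is discrete. Let W ∈ SL(2,ℂ) be such that W = X·U·Y_μ·U⁻¹ for some U ∈ Γ_μ, or W = X·U·X⁻¹·U⁻¹ for some U ∈ Γ_μ, and set ν = tr(W) − 2. If ν ≠ 0, then the subgroup Γ_ν of SL(2,ℂ) generated by X and Y_ν is discrete. -/

import Mathlib

open Matrix

noncomputable def X : Matrix.SpecialLinearGroup (Fin 2) ℂ :=
  ⟨!![1, 1; 0, 1], by simp [Matrix.det_fin_two_of]⟩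

noncomputable def Y (μ : ℂ) : Matrix.SpecialLinearGroup (Fin 2) ℂ :=
  ⟨!![1, 0; μ, 1], by simp [Matrix.det_fin_two_of]⟩

noncomputable instance : TopologicalSpace (Matrix.SpecialLinearGroup (Fin 2) ℂ) :=
  TopologicalSpace.induced ((↑) : Matrix.SpecialLinearGroup (Fin 2) ℂ → Matrix (Fin 2) (Fin 2) ℂ)
    inferInstance

namespace FareyAux

abbrev SL2 := Matrix.SpecialLinearGroup (Fin 2) ℂ
abbrev M2 := Matrix (Fin 2) (Fin 2) ℂ

lemma coe_inv_mul (T : SL2) : ((T⁻¹ : SL2) : M2) * (T : M2) = 1 := by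
  rw [← Matrix.SpecialLinearGroup.coe_mul, inv_mul_cancel]; rfl

lemma coe_mul_inv (T : SL2) : (T : M2) * ((T⁻¹ : SL2) : M2) = 1 := by
  rw [← Matrix.SpecialLinearGroup.coe_mul, mul_inv_cancel]; rfl

/-- Conjugation by a fixed element of SL2 is a homeomorphism of matrix space. -/
noncomputable def conjHomeo (T : SL2) : M2 ≃ₜ M2 where
  toFun m := (T : M2) * m * ((T⁻¹ : SL2) : M2)
  invFun m := ((T⁻¹ : SL2) : M2) * m * (T : M2)
  left_inv m := by
    simp only [← mul_assoc]
    rw [coe_inv_mul, one_mul, mul_assoc, coe_inv_mul, mul_one]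
  right_inv m := by
    simp only [← mul_assoc]
    rw [coe_mul_inv, one_mul, mul_assoc, coe_mul_inv, mul_one]
  continuous_toFun := (continuous_const.mul continuous_id).mul continuous_const
  continuous_invFun := (continuous_const.mul continuous_id).mul continuous_const

/-- If K is discrete and every element of H is conjugated into K by T, then H is discrete. -/
lemma discrete_of_conj_le (K H : Subgroup SL2) [DiscreteTopology K] (T : SL2)
    (hle : ∀ x ∈ H, T * x * T⁻¹ ∈ K) : DiscreteTopology H := by
  let ι : H → K := fun x => ⟨T * x.1 * T⁻¹, hle x.1 x.2⟩
  let p : H → M2 := fun x => ((x.1 : SL2) : M2)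
  let q : K → M2 := fun x => ((x.1 : SL2) : M2)
  have hfe : ⇑(conjHomeo T) ∘ p = q ∘ ι := by
    funext x
    simp [ι, p, q, conjHomeo, Function.comp]
  have hemb : Topology.IsEmbedding ι := by
    refine ⟨⟨?_⟩, ?_⟩
    · show TopologicalSpace.induced (Subtype.val : H → SL2)
          (TopologicalSpace.induced ((↑) : SL2 → M2) inferInstance)
        = TopologicalSpace.induced ι
          (TopologicalSpace.induced (Subtype.val : K → SL2)
            (TopologicalSpace.induced ((↑) : SL2 → M2) inferInstance))
      calc TopologicalSpace.induced (Subtype.val : H → SL2)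
            (TopologicalSpace.induced ((↑) : SL2 → M2) inferInstance)
          = TopologicalSpace.induced p inferInstance := induced_compose
        _ = TopologicalSpace.induced p
              (TopologicalSpace.induced (⇑(conjHomeo T)) inferInstance) := by
            rw [← (conjHomeo T).isInducing.eq_induced]
        _ = TopologicalSpace.induced ((conjHomeo T) ∘ p) inferInstance := induced_compose
        _ = TopologicalSpace.induced (q ∘ ι) inferInstance := by rw [hfe]
        _ = TopologicalSpace.induced ι (TopologicalSpace.induced q inferInstance) :=
            induced_compose.symm
        _ = TopologicalSpace.induced ι
              (TopologicalSpace.induced (Subtype.val : K → SL2)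
                (TopologicalSpace.induced ((↑) : SL2 → M2) inferInstance)) := by
            congr 1
            exact induced_compose.symm
    · intro x y hxy
      have h1 : T * (x.1 : SL2) * T⁻¹ = T * (y.1 : SL2) * T⁻¹ := congrArg Subtype.val hxy
      have : x.1 = y.1 := by
        have := congrArg (fun g => T⁻¹ * g * T) h1
        simpa [mul_assoc] using this
      exact Subtype.ext this
  exact hemb.discreteTopology

end FareyAux

open FareyAux in
/-- If Γ_μ is discrete, μ ≠ 0, W has one of the two Farey forms with U ∈ Γ_μ, and
ν = tr(W) − 2 ≠ 0, then Γ_ν is discrete. -/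
theorem farey_image_discrete (μ : ℂ) (hμ : μ ≠ 0)
    (hdisc : DiscreteTopology
      (Subgroup.closure ({X, Y μ} : Set (Matrix.SpecialLinearGroup (Fin 2) ℂ))))
    (W : Matrix.SpecialLinearGroup (Fin 2) ℂ)
    (h : (∃ U ∈ Subgroup.closure ({X, Y μ} : Set (Matrix.SpecialLinearGroup (Fin 2) ℂ)),
            W = X * U * Y μ * U⁻¹) ∨
         (∃ U ∈ Subgroup.closure ({X, Y μ} : Set (Matrix.SpecialLinearGroup (Fin 2) ℂ)),
            W = X * U * X⁻¹ * U⁻¹))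
    (ν : ℂ) (hν : ν = Matrix.trace (W : Matrix (Fin 2) (Fin 2) ℂ) - 2) (hν0 : ν ≠ 0) :
    DiscreteTopology
      (Subgroup.closure ({X, Y ν} : Set (Matrix.SpecialLinearGroup (Fin 2) ℂ))) := by
  classical
  haveI := hdisc
  set K := Subgroup.closure ({X, Y μ} : Set SL2) with hK
  have hXK : X ∈ K := Subgroup.subset_closure (by simp)
  have hYK : Y μ ∈ K := Subgroup.subset_closure (by simp)
  set V : SL2 := X⁻¹ * W with hVdef
  have hWV : W = X * V := by rw [hVdef]; group
  have hVconj : (∃ U ∈ K, V = U * Y μ * U⁻¹) ∨ (∃ U ∈ K, V = U * X⁻¹ * U⁻¹) := by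
    rcases h with ⟨U, hU, hW⟩ | ⟨U, hU, hW⟩
    · exact Or.inl ⟨U, hU, by rw [hVdef, hW]; group⟩
    · exact Or.inr ⟨U, hU, by rw [hVdef, hW]; group⟩
  have hVK : V ∈ K := by
    rcases hVconj with ⟨U, hU, hV⟩ | ⟨U, hU, hV⟩
    · rw [hV]; exact mul_mem (mul_mem hU hYK) (inv_mem hU)
    · rw [hV]; exact mul_mem (mul_mem hU (inv_mem hXK)) (inv_mem hU)
  -- trace of V is 2
  have htrV : Matrix.trace (V : M2) = 2 := by
    have key : ∀ (U P : SL2), Matrix.trace ((U * P * U⁻¹ : SL2) : M2)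
        = Matrix.trace (P : M2) := by
      intro U P
      rw [Matrix.SpecialLinearGroup.coe_mul, Matrix.SpecialLinearGroup.coe_mul,
        Matrix.trace_mul_cycle, coe_inv_mul, one_mul]
    rcases hVconj with ⟨U, _, hV⟩ | ⟨U, _, hV⟩
    · rw [hV, key]; norm_num [Y, Matrix.trace_fin_two]
    · rw [hV, key, Matrix.SpecialLinearGroup.coe_inv, Matrix.adjugate_fin_two]
      norm_num [X, Matrix.trace_fin_two]
  -- entries of V
  set a : ℂ := (V : M2) 0 0 with ha
  set b : ℂ := (V : M2) 0 1 with hb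
  set c : ℂ := (V : M2) 1 0 with hc
  set d : ℂ := (V : M2) 1 1 with hd
  have hVm : (V : M2) = !![a, b; c, d] := Matrix.eta_fin_two _
  have had : a + d = 2 := by
    have := htrV
    rw [Matrix.trace_fin_two] at this
    exact this
  have hdet : a * d - b * c = 1 := by
    have h2 := V.2
    rw [Matrix.det_fin_two] at h2
    exact h2
  have hcν : c = ν := by
    have h1 : Matrix.trace ((W : SL2) : M2) = a + c + d := by
      rw [hWV, Matrix.SpecialLinearGroup.coe_mul, hVm]
      rw [show ((X : SL2) : M2) = !![1, 1; 0, 1] from rfl, Matrix.mul_fin_two,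
        Matrix.trace_fin_two]
      simp
    rw [hν, h1]
    linear_combination -had
  -- the conjugating element
  set s : ℂ := (1 - a) / ν with hs
  set T : SL2 := ⟨!![1, s; 0, 1], by simp [Matrix.det_fin_two_of]⟩ with hT
  have hTX : T * X = X * T := by
    apply Subtype.ext
    rw [Matrix.SpecialLinearGroup.coe_mul, Matrix.SpecialLinearGroup.coe_mul,
      show ((T : SL2) : M2) = !![1, s; 0, 1] from rfl,
      show ((X : SL2) : M2) = !![1, 1; 0, 1] from rfl, Matrix.mul_fin_two, Matrix.mul_fin_two]
    ext i j
    fin_cases i <;> fin_cases j <;> (simp; try ring)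
  have hbν : b * ν = a * d - 1 := by linear_combination -hdet - b * hcν
  have hTV : T * V = Y ν * T := by
    apply Subtype.ext
    rw [Matrix.SpecialLinearGroup.coe_mul T V, Matrix.SpecialLinearGroup.coe_mul (Y ν) T, hVm,
      show ((T : SL2) : M2) = !![1, s; 0, 1] from rfl,
      show ((Y ν : SL2) : M2) = !![1, 0; ν, 1] from rfl, Matrix.mul_fin_two, Matrix.mul_fin_two]
    ext i j
    fin_cases i <;> fin_cases j <;> simp
    · -- 1*a + s*c = 1  (entry 0 0), after simp
      rw [hs, hcν]
      field_simp
      ring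
    · -- entry 0 1 : b + s*d = s
      rw [hs]
      field_simp
      linear_combination hbν + had
    · -- entry 1 0 : c = ν
      exact hcν
    · -- entry 1 1 : d = ν*s + 1
      rw [hs]
      field_simp
      linear_combination had
  -- conjugation carries Γ_ν into K
  have hgen : ∀ x ∈ Subgroup.closure ({X, Y ν} : Set SL2), T⁻¹ * x * T ∈ K := by
    have hXfix : T⁻¹ * X * T = X := by
      rw [mul_assoc, ← hTX, ← mul_assoc, inv_mul_cancel, one_mul]
    have hYfix : T⁻¹ * Y ν * T = V := by
      rw [mul_assoc, ← hTV, ← mul_assoc, inv_mul_cancel, one_mul]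
    intro x hx
    induction hx using Subgroup.closure_induction with
    | mem g hg =>
      rcases hg with rfl | rfl
      · rw [hXfix]; exact hXK
      · rw [hYfix]; exact hVK
    | one => simpa using one_mem K
    | mul g1 g2 hg1 hg2 ih1 ih2 =>
      have : T⁻¹ * (g1 * g2) * T = (T⁻¹ * g1 * T) * (T⁻¹ * g2 * T) := by group
      rw [this]; exact mul_mem ih1 ih2
    | inv g hg ih =>
      have : T⁻¹ * g⁻¹ * T = (T⁻¹ * g * T)⁻¹ := by group
      rw [this]; exact inv_mem ih
  exact FareyAux.discrete_of_conj_le K _ T⁻¹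
    (fun x hx => by simpa [inv_inv] using hgen x hx)
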